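/- Let C be a finite alphabet and X ⊆ C^ℕ a sofic subshift. Then the winning shift W(X) ⊆ ℕ^ℕ is weakly 1-codable. If moreover X is countable, then W(X) is 1-codable. -/

import Mathlib

open scoped BigOperators

/-- A language is regular if it is accepted by a DFA with finitely many states. -/
def IsRegularLang {α : Type*} (L : Set (List α)) : Prop :=
  ∃ (σ : Type) (_ : Fintype σ) (M : DFA α σ), ∀ w : List α, w ∈ M.accepts ↔ w ∈ L

/-- Pad a word over `A` to length `M` by prepending the padding symbol `none`. -/
def padOne {A : Type*} (M : ℕ) (w : List A) : List (Option A) :=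
  List.replicate (M - w.length) none ++ w.map some

/-- The padded form of a `d`-tuple of words over `A`, as a word over `(A ∪ {#})^d`. -/
def padTuple {A : Type*} {d : ℕ} (ws : Fin d → List A) : List (Fin d → Option A) :=
  List.ofFn fun j : Fin (Finset.univ.sup fun i : Fin d => (ws i).length) =>
    fun i : Fin d =>
      (padOne (Finset.univ.sup fun i : Fin d => (ws i).length) (ws i)).getD j.val none

/-- An abstract numeration system over the alphabet `A`, encoded by the order isomorphism
`rep : ℕ → L ⊆ A*` enumerating its (infinite) language in increasing order. -/
structure ANS (A : Type*) where
  rep : ℕ → List A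
  inj : Function.Injective rep

/-- A set `Y ⊆ ℕ^d` is `S`-recognizable if the padded representations of its members form
a regular language. -/
def ANS.Recognizable {A : Type*} (S : ANS A) {d : ℕ} (Y : Set (Fin d → ℕ)) : Prop :=
  IsRegularLang { w : List (Fin d → Option A) | ∃ t ∈ Y, w = padTuple fun i => S.rep (t i) }

/-- An ANS is addable if the graph of addition is `S`-recognizable. -/
def ANS.Addable {A : Type*} (S : ANS A) : Prop :=
  S.Recognizable { t : Fin 3 → ℕ | t 0 + t 1 = t 2 }

/-- An ANS is comparable if the relation `≤` is `S`-recognizable. -/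
def ANS.Comparable {A : Type*} (S : ANS A) : Prop :=
  S.Recognizable { t : Fin 2 → ℕ | t 0 ≤ t 1 }

/-- An ANS is regular if `ℕ` (i.e. its language) is `S`-recognizable. -/
def ANS.IsRegularANS {A : Type*} (S : ANS A) : Prop :=
  S.Recognizable (Set.univ : Set (Fin 1 → ℕ))

/-- The unary ANS, with language `0*` ordered by length. -/
def unaryANS : ANS Unit where
  rep := fun n => List.replicate n ()
  inj := fun m n h => by simpa using congrArg List.length h

/-- `x` is `S`-automatic: some DFAO outputs `x n` on input `rep_S n`. -/
def SAutomatic {A C : Type*} (S : ANS A) (x : ℕ → C) : Prop :=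
  ∃ (Q : Type) (_ : Fintype Q) (M : DFA A Q) (τ : Q → C),
    ∀ n : ℕ, τ (M.eval (S.rep n)) = x n

/-- The shift map on one-sided infinite words. -/
def shiftMap {C : Type*} (x : ℕ → C) : ℕ → C := fun n => x (n + 1)

/-- The orbit closure of `x` (closure in the product topology over the discrete alphabet):
`y` belongs to it iff every finite prefix of `y` occurs in `x`. -/
def orbitClosure {C : Type*} (x : ℕ → C) : Set (ℕ → C) :=
  { y | ∀ n : ℕ, ∃ m : ℕ, ∀ i < n, y i = x (m + i) }

/-- A subshift: a shift-invariant subset of `C^ℕ` that is closed in the product topology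
over the discrete alphabet (expressed combinatorially). -/
def IsSubshift {C : Type*} (X : Set (ℕ → C)) : Prop :=
  (∀ x ∈ X, shiftMap x ∈ X) ∧
  ∀ y : ℕ → C, (∀ n : ℕ, ∃ x ∈ X, ∀ i < n, y i = x i) → y ∈ X

/-- The language of a set of infinite words: all finite factors of its elements. -/
def LangOf {C : Type*} (X : Set (ℕ → C)) : Set (List C) :=
  { w | ∃ x ∈ X, ∃ p : ℕ, w = List.ofFn fun i : Fin w.length => x (p + i) }

/-- A word is right special in (the language of) `X` if it has two distinct one-letter
extensions in the language of `X`. -/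
def RightSpecial {C : Type*} (X : Set (ℕ → C)) (w : List C) : Prop :=
  ∃ a b : C, a ≠ b ∧ w ++ [a] ∈ LangOf X ∧ w ++ [b] ∈ LangOf X

/-- The factor complexity of `x`: the number of distinct factors of length `n`. -/
noncomputable def factorComplexity {C : Type*} (x : ℕ → C) (n : ℕ) : ℕ :=
  Set.ncard { w : List C | ∃ p : ℕ, w = List.ofFn fun i : Fin n => x (p + i) }

/-- `T` is a strategy tree witnessing `α ∈ W(X)`: a prefix-closed set of finite words
containing the empty word, in which every word of length `i` has exactly `α i + 1`
one-letter extensions, and all whose infinite branches lie in `X`. -/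
def IsStrategyTree {C : Type*} (X : Set (ℕ → C)) (α : ℕ → ℕ) (T : Set (List C)) : Prop :=
  ([] : List C) ∈ T ∧
  (∀ u v : List C, u ++ v ∈ T → u ∈ T) ∧
  (∀ w ∈ T, Set.ncard { c : C | w ++ [c] ∈ T } = α w.length + 1) ∧
  (∀ y : ℕ → C, (∀ n : ℕ, (List.ofFn fun i : Fin n => y i) ∈ T) → y ∈ X)

/-- The winning shift of `X ⊆ C^ℕ`, a subset of `ℕ^ℕ`. -/
def winningShift {C : Type*} (X : Set (ℕ → C)) : Set (ℕ → ℕ) :=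
  { α | ∃ T : Set (List C), IsStrategyTree X α T }

/-- Membership in the winning set of a set `X` of finite words, defined recursively:
`ε ∈ W(X)` iff `ε ∈ X`, and `a :: α ∈ W(X)` iff there is a set of `a + 1` letters `c`
such that `α` is in the winning set of the left quotient of `X` by `c`. -/
def winningSetMem {C : Type*} : List ℕ → Set (List C) → Prop
  | [], X => [] ∈ X
  | a :: α, X => ∃ S : Finset C, S.card = a + 1 ∧ ∀ c ∈ S, winningSetMem α { w | c :: w ∈ X }

/-- `Σ y = m`: the sum of the letters of `y ∈ ℕ^ℕ` is finite and equals `m`. -/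
def sumEq (y : ℕ → ℕ) (m : ℕ) : Prop :=
  (Function.support y).Finite ∧ ∑ᶠ i, y i = m

/-- `Y ⊆ ℕ^ℕ` has finite coding dimension: the sums `Σ y`, `y ∈ Y`, are uniformly bounded. -/
def FiniteCodingDim (Y : Set (ℕ → ℕ)) : Prop :=
  ∃ d : ℕ, ∀ y ∈ Y, ∀ F : Finset ℕ, ∑ i ∈ F, y i ≤ d

/-- The set `{ν(y) : y ∈ Y, Σy = k} ⊆ ℕᵏ`: nondecreasing `k`-tuples `t` such that the word
whose letter at `j` is the number of occurrences of `j` in `t` belongs to `Y`. -/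
def nuSet (Y : Set (ℕ → ℕ)) (k : ℕ) : Set (Fin k → ℕ) :=
  { t | Monotone t ∧ (fun j => Set.ncard { i : Fin k | t i = j }) ∈ Y }

/-- `Y ⊆ ℕ^ℕ` is weakly `S`-codable if `{ν(y) : y ∈ Y, Σy = k}` is `S`-recognizable for
every `k`. -/
def WeaklySCodable {A : Type*} (S : ANS A) (Y : Set (ℕ → ℕ)) : Prop :=
  ∀ k : ℕ, S.Recognizable (nuSet Y k)

/-- `Y ⊆ ℕ^ℕ` is `S`-codable if it is weakly `S`-codable and has finite coding dimension. -/
def SCodable {A : Type*} (S : ANS A) (Y : Set (ℕ → ℕ)) : Prop :=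
  WeaklySCodable S Y ∧ FiniteCodingDim Y

/-- `P_{111}(Y)`: strictly increasing triples `(a, b, c)` such that the word with letter `1`
exactly at positions `a`, `b`, `c` and `0` elsewhere belongs to `Y`. -/
def P111 (Y : Set (ℕ → ℕ)) : Set (Fin 3 → ℕ) :=
  { t | t 0 < t 1 ∧ t 1 < t 2 ∧
        (fun j => if j = t 0 ∨ j = t 1 ∨ j = t 2 then 1 else 0) ∈ Y }

/-- `P_v(Y)` for a finite word `v` over `ℕ`: strictly increasing tuples `n` such that the
word with letter `v i` at position `n i` and `0` elsewhere belongs to `Y`. -/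
def PvSet (v : List ℕ) (Y : Set (ℕ → ℕ)) : Set (Fin v.length → ℕ) :=
  { n | StrictMono n ∧
        (fun j => ∑ i : Fin v.length, if n i = j then v.get i else 0) ∈ Y }

/-- `X` is sofic: the set of label sequences of right-infinite paths in a finite
edge-labeled graph. -/
def IsSofic {C : Type*} (X : Set (ℕ → C)) : Prop :=
  ∃ (V : Type) (_ : Fintype V) (E : Set (V × C × V)),
    X = { x | ∃ p : ℕ → V, ∀ n : ℕ, (p n, x n, p (n + 1)) ∈ E }

/-- The factor `x[a..b-1]` of an infinite word. -/
def segmentOf {C : Type*} (x : ℕ → C) (a b : ℕ) : List C :=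
  List.ofFn fun i : Fin (b - a) => x (a + i)

/-- `U · V^ω`: infinite words that decompose as a word of `U` followed by infinitely many
nonempty words of `V`. -/
def omegaIter {C : Type*} (U V : Set (List C)) : Set (ℕ → C) :=
  { x | ∃ k : ℕ → ℕ, StrictMono k ∧ segmentOf x 0 (k 0) ∈ U ∧
        ∀ i : ℕ, segmentOf x (k i) (k (i + 1)) ∈ V }

/-- `X ⊆ C^ℕ` is ω-regular: a finite union of sets `U · V^ω` with `U`, `V` regular. -/
def IsOmegaRegular {C : Type*} (X : Set (ℕ → C)) : Prop :=
  ∃ (n : ℕ) (U V : Fin n → Set (List C)),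
    (∀ i, IsRegularLang (U i) ∧ IsRegularLang (V i)) ∧
    X = ⋃ i, omegaIter (U i) (V i)

/-- The words `p₁ = a`, `p_{k+1} = p_k bᵏ p_k` (with `a = false`, `b = true`). -/
def pWord : ℕ → List Bool
  | 0 => []
  | 1 => [false]
  | (k + 2) => pWord (k + 1) ++ List.replicate (k + 1) true ++ pWord (k + 1)

/-- Combinatorial continuity of `φ` on `Y` for product topologies over discrete alphabets:
every finite prefix of `φ y` is determined by a finite prefix of `y`. -/
def ContOn {B C : Type*} (φ : (ℕ → B) → (ℕ → C)) (Y : Set (ℕ → B)) : Prop :=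
  ∀ y ∈ Y, ∀ n : ℕ, ∃ m : ℕ, ∀ y' ∈ Y, (∀ i < m, y' i = y i) → ∀ i < n, φ y' i = φ y i

set_option linter.unusedSectionVars false
set_option maxHeartbeats 1000000


namespace PS17
variable {C : Type} [Fintype C] {V : Type} [Fintype V]

/-- Right-infinite path existence from a vertex. -/
def Live (E : Set (V × C × V)) (v : V) : Prop :=
  ∃ (p : ℕ → V) (z : ℕ → C), p 0 = v ∧ ∀ n, (p n, z n, p (n + 1)) ∈ E

def SG (E : Set (V × C × V)) : Set (ℕ → C) :=
  { x | ∃ p : ℕ → V, ∀ n : ℕ, (p n, x n, p (n + 1)) ∈ E }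

def dstep (E : Set (V × C × V)) (P : Set V) (c : C) : Set V :=
  { v' | ∃ v ∈ P, (v, c, v') ∈ E }

def Bvec (E : Set (V × C × V)) : Set V → Prop := fun P => ∃ v ∈ P, Live E v

def StepW (E : Set (V × C × V)) (a : ℕ) (W : Set V → Prop) : Set V → Prop :=
  fun P => ∃ S : Finset C, S.card = a + 1 ∧ ∀ c ∈ S, W (dstep E P c)

def Hvec (E : Set (V × C × V)) (l : List ℕ) : Set V → Prop := l.foldr (StepW E) (Bvec E)

def Pst (E : Set (V × C × V)) (w : List C) : Set V := w.foldl (dstep E) Set.univ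

@[simp] lemma hvec_nil (E : Set (V × C × V)) : Hvec E [] = Bvec E := rfl

@[simp] lemma hvec_cons (E : Set (V × C × V)) (a : ℕ) (l : List ℕ) :
    Hvec E (a :: l) = StepW E a (Hvec E l) := rfl

lemma hvec_append (E : Set (V × C × V)) (u l : List ℕ) :
    Hvec E (u ++ l) = u.foldr (StepW E) (Hvec E l) := by
  simp [Hvec, List.foldr_append]

lemma live_succ {E : Set (V × C × V)} {v : V} (h : Live E v) :
    ∃ c v', (v, c, v') ∈ E ∧ Live E v' := by
  obtain ⟨p, z, hp0, hp⟩ := h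
  exact ⟨z 0, p 1, by rw [← hp0]; exact hp 0,
    fun i => p (i + 1), fun i => z (i + 1), rfl, fun n => hp (n + 1)⟩

lemma bvec_step0 {E : Set (V × C × V)} {P : Set V} (h : Bvec E P) :
    StepW E 0 (Bvec E) P := by
  obtain ⟨v, hvP, hv⟩ := h
  obtain ⟨c, v', he, hv'⟩ := live_succ hv
  exact ⟨{c}, by simp, fun d hd => by
    simp at hd; subst hd; exact ⟨v', ⟨v, hvP, he⟩, hv'⟩⟩

lemma hvec_live {E : Set (V × C × V)} :
    ∀ (l : List ℕ) (P : Set V), Hvec E l P → ∃ v ∈ P, Live E v := by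
  intro l
  induction l with
  | nil => exact fun P h => h
  | cons a l ih =>
    rintro P ⟨S, hS, hmem⟩
    have hSne : S.Nonempty := Finset.card_pos.mp (by omega)
    obtain ⟨c, hc⟩ := hSne
    obtain ⟨v', hv'P, hv'⟩ := ih _ (hmem c hc)
    obtain ⟨v, hvP, he⟩ := hv'P
    obtain ⟨p, z, hp0, hp⟩ := hv'
    refine ⟨v, hvP, fun i => if i = 0 then v else p (i - 1), fun i => if i = 0 then c else z (i - 1), by simp, ?_⟩
    intro n
    rcases n with _ | n
    · simpa [hp0] using he
    · simpa using hp n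

lemma pst_path {E : Set (V × C × V)} :
    ∀ (w : List C) (v : V), v ∈ Pst E w →
      ∃ p : ℕ → V, (∀ (i : ℕ) (h : i < w.length), (p i, w[i], p (i + 1)) ∈ E) ∧
        p w.length = v := by
  intro w
  induction w using List.reverseRecOn with
  | nil => exact fun v _ => ⟨fun _ => v, by simp, rfl⟩
  | append_singleton w c ih =>
    intro v hv
    have hv' : v ∈ dstep E (Pst E w) c := by
      simpa [Pst, List.foldl_append] using hv
    obtain ⟨u, hu, he⟩ := hv'
    obtain ⟨p, hp, hpe⟩ := ih u hu
    refine ⟨fun i => if i = w.length + 1 then v else p i, ?_, by simp⟩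
    intro i hi
    simp only [List.length_append, List.length_singleton] at hi
    rcases Nat.lt_or_ge i w.length with h | h
    · have h1 : i ≠ w.length + 1 := by omega
      have h2 : i + 1 ≠ w.length + 1 := by omega
      simp only [h1, h2, if_neg, ite_false]
      have := hp i h
      rwa [List.getElem_append_left h]
    · have h3 : i = w.length := by omega
      subst h3
      simp only [List.getElem_concat_length]
      have h1 : w.length ≠ w.length + 1 := by omega
      simp [h1, hpe, he]

def LPath (E : Set (V × C × V)) (P : Set V) (w : List C) : Prop :=
  ∃ p : ℕ → V, p 0 ∈ P ∧ (∀ (i : ℕ) (h : i < w.length), (p i, w[i], p (i + 1)) ∈ E) ∧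
    Live E (p w.length)

lemma pst_live_x {E : Set (V × C × V)} {w : List C} {v : V}
    (hv : v ∈ Pst E w) (hl : Live E v) :
    ∃ x ∈ SG E, ∀ (i : ℕ) (h : i < w.length), w[i] = x i := by
  classical
  obtain ⟨p, hp, hpe⟩ := pst_path w v hv
  obtain ⟨q, z, hq0, hq⟩ := hl
  refine ⟨fun i => if h : i < w.length then w[i] else z (i - w.length),
    ⟨fun i => if i < w.length then p i else q (i - w.length), ?_⟩, ?_⟩
  · intro n
    rcases Nat.lt_or_ge n w.length with h | h
    · rcases Nat.lt_or_ge (n + 1) w.length with h' | h'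
      · simp only [if_pos h, dif_pos h, if_pos h']
        exact hp n h
      · have e1 : q (n + 1 - w.length) = p (n + 1) := by
          have h2 : n + 1 = w.length := by omega
          rw [show n + 1 - w.length = 0 by omega, hq0, ← hpe, h2]
        simp only [if_pos h, dif_pos h, if_neg (by omega : ¬ n + 1 < w.length), e1]
        exact hp n h
    · have e2 : n + 1 - w.length = (n - w.length) + 1 := by omega
      simp only [if_neg (by omega : ¬ n < w.length), dif_neg (by omega : ¬ n < w.length),
        if_neg (by omega : ¬ n + 1 < w.length), e2]
      exact hq (n - w.length)
  · intro i h
    simp only [dif_pos h]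

lemma treeToH {E : Set (V × C × V)} :
    ∀ (l : List ℕ) (P : Set V) (T : Set (List C)),
      [] ∈ T → (∀ u v : List C, u ++ v ∈ T → u ∈ T) →
      (∀ w ∈ T, ∀ h : w.length < l.length, Set.ncard {c | w ++ [c] ∈ T} = l[w.length]'h + 1) →
      (∀ w ∈ T, w.length = l.length → LPath E P w) →
      Hvec E l P := by
  intro l
  induction l with
  | nil =>
    intro P T hnil _ _ hlv
    obtain ⟨p, hp0, _, hlive⟩ := hlv [] hnil rfl
    exact ⟨p 0, hp0, hlive⟩
  | cons a l ih =>
    intro P T hnil hpc hcnt hlv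
    have hC : ({c : C | [c] ∈ T}).ncard = a + 1 := by
      simpa using hcnt [] hnil (by simp)
    have hfin : ({c : C | [c] ∈ T}).Finite := Set.toFinite _
    refine ⟨hfin.toFinset, by rw [← Set.ncard_eq_toFinset_card _ hfin]; exact hC, ?_⟩
    intro c hc
    have hcT : [c] ∈ T := (Set.Finite.mem_toFinset hfin).mp hc
    apply ih (dstep E P c) {u | c :: u ∈ T}
    · exact hcT
    · intro u v huv; exact hpc (c :: u) v huv
    · intro w hw h
      have h2 : (c :: w).length < (a :: l).length := by simpa using Nat.succ_lt_succ h
      have := hcnt (c :: w) hw h2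
      simpa using this
    · intro w hw hlen
      obtain ⟨p, hp0, hpe, hplive⟩ := hlv (c :: w) hw (by simpa using hlen)
      refine ⟨fun i => p (i + 1), ⟨p 0, hp0, ?_⟩, ?_, ?_⟩
      · have := hpe 0 (by simp); simpa using this
      · intro i hi
        have := hpe (i + 1) (by simpa using Nat.succ_lt_succ hi)
        simpa using this
      · simpa using hplive

lemma chainX {X : Set (ℕ → C)} {α : ℕ → ℕ} {T : Set (List C)} (hST : IsStrategyTree X α T)
    (u : ℕ → List C) (h0 : u 0 = []) (hm : ∀ m, u m ∈ T)
    (hs : ∀ m, ∃ c, u (m + 1) = u m ++ [c]) :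
    ∃ x ∈ X, ∀ m, List.ofFn (fun i : Fin m => x i) = u m := by
  obtain ⟨hnil, hpc, hcnt, hbr⟩ := hST
  have hlen : ∀ m, (u m).length = m := by
    intro m
    induction m with
    | zero => simp [h0]
    | succ m ih => obtain ⟨c, hc⟩ := hs m; simp [hc, ih]
  have hpre : ∀ m n, m ≤ n → u m <+: u n := by
    intro m n h
    induction h with
    | refl => exact List.prefix_refl _
    | step h ih =>
      obtain ⟨c, hc⟩ := hs _
      rw [hc]
      exact ih.trans (List.prefix_append _ _)
  obtain ⟨c₀, _⟩ := hs 0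
  have hofn : ∀ m, List.ofFn (fun i : Fin m => (u (i + 1)).getD i c₀) = u m := by
    intro m
    apply List.ext_getElem (by simp [hlen])
    intro i h1 h2
    simp only [List.getElem_ofFn]
    have hiu : i < (u (i + 1)).length := by rw [hlen]; omega
    rw [List.getD_eq_getElem _ _ hiu]
    have h3 : i < m := by simpa using h1
    exact (hpre (i + 1) m h3).getElem hiu
  refine ⟨fun i => (u (i + 1)).getD i c₀, hbr _ (fun n => (hofn n) ▸ hm n), hofn⟩

lemma treeBranch {X : Set (ℕ → C)} {α : ℕ → ℕ} {T : Set (List C)} (hST : IsStrategyTree X α T)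
    {w : List C} (hw : w ∈ T) :
    ∃ x ∈ X, ∀ (i : ℕ) (h : i < w.length), w[i] = x i := by
  classical
  obtain ⟨hnil, hpc, hcnt, hbr⟩ := hST
  have hchild : ∀ v ∈ T, ∃ c : C, v ++ [c] ∈ T := by
    intro v hv
    have h1 := hcnt v hv
    have h2 : ({c : C | v ++ [c] ∈ T}).Nonempty :=
      Set.nonempty_of_ncard_ne_zero (by rw [h1]; omega)
    exact h2
  obtain ⟨cw, hcw⟩ := hchild w hw
  haveI : Nonempty C := ⟨cw⟩
  choose! f hf using hchild
  let ext : ℕ → List C := fun m => Nat.rec w (fun _ v => v ++ [f v]) m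
  have hext : ∀ j, ext j ∈ T := by
    intro j
    induction j with
    | zero => exact hw
    | succ j ih => exact hf _ ih
  set u : ℕ → List C := fun m => if m ≤ w.length then w.take m else ext (m - w.length) with hu
  have humem : ∀ m, u m ∈ T := by
    intro m
    by_cases h : m ≤ w.length
    · simp only [hu, h, if_pos]
      exact hpc _ (w.drop m) (by rw [List.take_append_drop]; exact hw)
    · simp only [hu, h, if_neg, ite_false]
      exact hext _
  have hustep : ∀ m, ∃ c, u (m + 1) = u m ++ [c] := by
    intro m
    rcases Nat.lt_or_ge m w.length with h | h
    · refine ⟨w[m], ?_⟩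
      have h1 : m + 1 ≤ w.length := h
      simp only [hu, if_pos h1, if_pos (Nat.le_of_lt h)]
      rw [List.take_succ, List.getElem?_eq_getElem h]
      rfl
    · rcases Nat.eq_or_lt_of_le h with h' | h'
      · obtain rfl : m = w.length := h'.symm
        refine ⟨f w, ?_⟩
        have h1 : ¬ (w.length + 1 ≤ w.length) := by omega
        simp only [hu, if_neg h1, if_pos (le_refl w.length), List.take_length]
        rw [show w.length + 1 - w.length = 1 by omega]
        rfl
      · refine ⟨f (ext (m - w.length)), ?_⟩
        have h1 : ¬ (m ≤ w.length) := by omega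
        have h2 : ¬ (m + 1 ≤ w.length) := by omega
        simp only [hu, if_neg h1, if_neg h2]
        rw [show m + 1 - w.length = (m - w.length) + 1 by omega]
  have hu0 : u 0 = [] := by simp [hu]
  obtain ⟨x, hxX, hofn⟩ := chainX ⟨hnil, hpc, hcnt, hbr⟩ u hu0 humem hustep
  refine ⟨x, hxX, ?_⟩
  intro i h
  have h1 := hofn w.length
  have h2 : u w.length = w := by simp [hu]
  rw [h2] at h1
  have h4 := congrArg (fun t : List C => t[i]?) h1
  simp only [List.getElem?_ofFn, List.ofFnNthVal] at h4
  rw [dif_pos (by simpa using h)] at h4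
  rw [List.getElem?_eq_getElem h] at h4
  exact (Option.some_inj.mp h4).symm

lemma vecToWin {E : Set (V × C × V)} {X : Set (ℕ → C)} (hsub : IsSubshift X) (hX : X = SG E)
    (β : ℕ → ℕ) (Vs : ℕ → Set V → Prop)
    (hchain : ∀ j P, Vs j P → StepW E (β j) (Vs (j + 1)) P)
    (hlive : ∀ j P, Vs j P → ∃ v ∈ P, Live E v)
    (h0 : Vs 0 Set.univ) : β ∈ winningShift X := by
  classical
  have hsel : ∀ j P, ∃ S : Finset C, Vs j P →
      S.card = β j + 1 ∧ ∀ c ∈ S, Vs (j + 1) (dstep E P c) := by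
    intro j P
    by_cases h : Vs j P
    · obtain ⟨S, h1, h2⟩ := hchain j P h
      exact ⟨S, fun _ => ⟨h1, h2⟩⟩
    · exact ⟨∅, fun hh => absurd hh h⟩
  choose sel hsel using hsel
  set T : Set (List C) :=
    {w | ∀ (i : ℕ) (h : i < w.length), w[i] ∈ sel i (Pst E (w.take i))} with hT
  have hTpc : ∀ u v : List C, u ++ v ∈ T → u ∈ T := by
    intro u v huv i hi
    have h2 : i < (u ++ v).length := by simp; omega
    have h3 := huv i h2
    rw [List.getElem_append_left hi] at h3
    rwa [List.take_append_of_le_length (le_of_lt hi)] at h3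
  have hTinv : ∀ w ∈ T, Vs w.length (Pst E w) := by
    intro w
    induction w using List.reverseRecOn with
    | nil => intro _; simpa [Pst] using h0
    | append_singleton w c ih =>
      intro hw
      have hwT : w ∈ T := hTpc w [c] hw
      have hVs := ih hwT
      have hc : c ∈ sel w.length (Pst E w) := by
        have h1 := hw w.length (by simp)
        rwa [List.getElem_concat_length rfl, List.take_left] at h1
      have h2 := (hsel w.length (Pst E w) hVs).2 c hc
      have hPst : Pst E (w ++ [c]) = dstep E (Pst E w) c := by
        simp [Pst, List.foldl_append]
      have hlen2 : (w ++ [c]).length = w.length + 1 := by simp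
      rw [hlen2, hPst]
      exact h2
  refine ⟨T, ?_, hTpc, ?_, ?_⟩
  · intro i hi
    simp at hi
  · intro w hw
    have hVs := hTinv w hw
    have hcard := (hsel w.length (Pst E w) hVs).1
    have hset : {c : C | w ++ [c] ∈ T} = ↑(sel w.length (Pst E w)) := by
      ext c
      constructor
      · intro hc
        have h1 := hc w.length (by simp)
        rw [List.getElem_concat_length rfl, List.take_left] at h1
        exact h1
      · intro hc i hi
        have hi' : i < w.length + 1 := by simpa using hi
        rcases Nat.lt_or_ge i w.length with h | h
        · have h1 := hw i h
          rw [List.getElem_append_left h, List.take_append_of_le_length (le_of_lt h)]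
          exact h1
        · have h3 : i = w.length := by omega
          subst h3
          rw [List.getElem_concat_length rfl, List.take_left]
          exact hc
    rw [hset, Set.ncard_coe_finset, hcard]
  · intro y hy
    apply hsub.2
    intro n
    have hyn := hy n
    have hVs := hTinv _ hyn
    obtain ⟨v, hvP, hvl⟩ := hlive _ _ hVs
    obtain ⟨x, hxSG, hxe⟩ := pst_live_x hvP hvl
    refine ⟨x, by rw [hX]; exact hxSG, ?_⟩
    intro i hi
    have h1 := hxe i (by simpa using hi)
    rw [List.getElem_ofFn] at h1
    simpa using h1

lemma hvec_to_win {E : Set (V × C × V)} {X : Set (ℕ → C)} (hsub : IsSubshift X)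
    (hX : X = SG E) {l : List ℕ} (h : Hvec E l Set.univ) :
    (fun j => l.getD j 0) ∈ winningShift X := by
  apply vecToWin hsub hX _ (fun j => Hvec E (l.drop j))
  · intro j P hP
    rcases Nat.lt_or_ge j l.length with hj | hj
    · rw [List.drop_eq_getElem_cons hj] at hP
      rw [List.getD_eq_getElem _ _ hj]
      exact hP
    · rw [List.drop_eq_nil_of_le hj] at hP
      rw [List.getD_eq_default _ _ hj, List.drop_eq_nil_of_le (by omega : l.length ≤ j + 1)]
      exact bvec_step0 hP
  · intro j P hP
    exact hvec_live _ _ hP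
  · simpa using h

lemma win_to_hvec {E : Set (V × C × V)} {X : Set (ℕ → C)} (hX : X = SG E) {y : ℕ → ℕ}
    (hy : y ∈ winningShift X) (n : ℕ) :
    Hvec E (List.ofFn fun i : Fin n => y i) Set.univ := by
  obtain ⟨T, hST⟩ := hy
  obtain ⟨hnil, hpc, hcnt, hbr⟩ := hST
  apply treeToH _ _ T hnil hpc
  · intro w hw h
    rw [hcnt w hw]
    congr 1
    simp [List.getElem_ofFn]
  · intro w hw hlenw
    obtain ⟨x, hxX, hxe⟩ := treeBranch ⟨hnil, hpc, hcnt, hbr⟩ hw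
    rw [hX] at hxX
    obtain ⟨p, hp⟩ := hxX
    refine ⟨p, Set.mem_univ _, ?_, ?_⟩
    · intro i hi
      rw [hxe i hi]
      exact hp i
    · exact ⟨fun m => p (w.length + m), fun m => x (w.length + m), rfl,
        fun m => by simpa [Nat.add_assoc] using hp (w.length + m)⟩

lemma win_equiv {E : Set (V × C × V)} {X : Set (ℕ → C)} (hsub : IsSubshift X)
    (hX : X = SG E) {y : ℕ → ℕ} {n : ℕ} (hy0 : ∀ j, n ≤ j → y j = 0) :
    y ∈ winningShift X ↔ Hvec E (List.ofFn fun i : Fin n => y i) Set.univ := by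
  constructor
  · exact fun h => win_to_hvec hX h n
  · intro h
    have h1 := hvec_to_win hsub hX h
    have hfun : (fun j => (List.ofFn fun i : Fin n => y i).getD j 0) = y := by
      funext j
      rcases Nat.lt_or_ge j n with hj | hj
      · rw [List.getD_eq_getElem _ _ (by simpa using hj)]
        simp
      · rw [List.getD_eq_default _ _ (by simpa using hj)]
        exact (hy0 j hj).symm
    rwa [hfun] at h1

noncomputable def cntEq {k : ℕ} (t : Fin k → ℕ) (m : ℕ) : ℕ := Set.ncard {i | t i = m}

def wordOf {k : ℕ} (t : Fin k → ℕ) : List (Fin k → Option Unit) :=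
  List.ofFn fun j : Fin (Finset.univ.sup t) => fun i =>
    if Finset.univ.sup t - t i ≤ j.val then some () else none

open Classical in
noncomputable def auto (E : Set (V × C × V)) (k : ℕ) :
    DFA (Fin k → Option Unit) (Option (Set (Fin k) × (Set V → Prop))) where
  step := fun s g =>
    match s with
    | none => none
    | some (A, W) =>
      if A ⊆ {i | (g i).isSome} ∧
          (∀ i j : Fin k, i ≤ j → i ∈ {i' | (g i').isSome} → j ∈ {i' | (g i').isSome}) ∧
          ({i | (g i).isSome}).Nonempty
      then some ({i | (g i).isSome}, StepW E (Set.ncard ({i | (g i).isSome} \ A)) W)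
      else none
  start := some (∅, Bvec E)
  accept := {s | ∃ A W, s = some (A, W) ∧ StepW E (k - Set.ncard A) W Set.univ}

lemma sup_attained {k : ℕ} (t : Fin k → ℕ) (h : 0 < Finset.univ.sup t) :
    ∃ i, t i = Finset.univ.sup t := by
  rcases isEmpty_or_nonempty (Fin k) with he | hne
  · rw [Finset.univ_eq_empty] at h
    simp at h
  · obtain ⟨i, _, hi⟩ := Finset.exists_mem_eq_sup Finset.univ Finset.univ_nonempty t
    exact ⟨i, hi.symm⟩

lemma padOne_rep (n M : ℕ) (hn : n ≤ M) (j : ℕ) (hj : j < M) :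
    (padOne M (List.replicate n ())).getD j none
      = if M - n ≤ j then some () else none := by
  have h1 : padOne M (List.replicate n ()) =
      List.replicate (M - n) none ++ List.replicate n (some ()) := by
    simp [padOne]
  have hlen : (padOne M (List.replicate n ())).length = M := by
    rw [h1]; simp; omega
  rw [List.getD_eq_getElem _ _ (by omega)]
  rw [List.getElem_of_eq h1]
  rcases Nat.lt_or_ge j (M - n) with h | h
  · rw [if_neg (by omega)]
    rw [List.getElem_append_left (by simpa using h)]
    simp
  · rw [if_pos (by omega)]
    rw [List.getElem_append_right (by simpa using h)]
    simp

lemma pad_eq {k : ℕ} (t : Fin k → ℕ) :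
    (padTuple fun i => unaryANS.rep (t i)) = wordOf t := by
  apply List.ext_getElem
  · simp [padTuple, wordOf, unaryANS]
  · intro j h1 h2
    simp only [padTuple, wordOf, List.getElem_ofFn]
    funext i
    have hsup : (Finset.univ.sup fun i : Fin k => (unaryANS.rep (t i)).length)
        = Finset.univ.sup t := by simp [unaryANS]
    have hrep : unaryANS.rep (t i) = List.replicate (t i) () := rfl
    rw [hrep, hsup]
    have hti : t i ≤ Finset.univ.sup t := Finset.le_sup (Finset.mem_univ i)
    have hjM : j < Finset.univ.sup t := by
      have := h2; simpa [wordOf] using this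
    exact padOne_rep (t i) (Finset.univ.sup t) hti j hjM

lemma wordOf_getElem {k : ℕ} (t : Fin k → ℕ) (j : ℕ) (h : j < (wordOf t).length) :
    (wordOf t)[j] = fun i => if Finset.univ.sup t - t i ≤ j then some () else none :=
  List.getElem_ofFn _

lemma run_wordOf {E : Set (V × C × V)} {k : ℕ} (t : Fin k → ℕ) (ht : Monotone t) :
    ∀ j, j ≤ Finset.univ.sup t →
      (auto E k).evalFrom (auto E k).start ((wordOf t).take j) =
        some ({i | Finset.univ.sup t - t i < j},
          Hvec E (List.ofFn fun r : Fin j =>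
            cntEq t (Finset.univ.sup t - j + 1 + r))) := by
  set M := Finset.univ.sup t with hM
  have hti : ∀ i, t i ≤ M := fun i => Finset.le_sup (Finset.mem_univ i)
  intro j
  induction j with
  | zero =>
    intro _
    rw [List.take_zero, DFA.evalFrom_nil]
    have h1 : {i : Fin k | M - t i < 0} = ∅ := by ext i; simp
    rw [h1, List.ofFn_zero]
    rfl
  | succ j ih =>
    intro hj1
    have hjM : j < M := hj1
    have hlen : j < (wordOf t).length := by simpa [wordOf, ← hM] using hjM
    rw [List.take_succ, List.getElem?_eq_getElem hlen]
    have htl : ((wordOf t)[j] :: []) = Option.toList (some ((wordOf t)[j])) := rfl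
    rw [← htl]
    rw [DFA.evalFrom_append_singleton, ih (by omega)]
    have hg : (wordOf t)[j] = fun i => if M - t i ≤ j then some () else none := by
      simp [wordOf, ← hM]
    rw [hg]
    dsimp only [auto]
    have hS' : {i : Fin k | (if M - t i ≤ j then some () else (none : Option Unit)).isSome}
        = {i | M - t i ≤ j} := by
      ext i; by_cases h : M - t i ≤ j <;> simp [h]
    have hvalid : {i : Fin k | M - t i < j} ⊆ {i | M - t i ≤ j} ∧
        (∀ i j' : Fin k, i ≤ j' → i ∈ {i' | M - t i' ≤ j} → j' ∈ {i' | M - t i' ≤ j}) ∧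
        ({i : Fin k | M - t i ≤ j}).Nonempty := by
      refine ⟨fun i hi => by simp only [Set.mem_setOf_eq] at hi ⊢; omega, ?_, ?_⟩
      · intro i i' hle hi
        have h2 := ht hle
        simp only [Set.mem_setOf_eq] at hi ⊢
        omega
      · obtain ⟨i0, hi0⟩ := sup_attained t (by omega)
        exact ⟨i0, by simp only [Set.mem_setOf_eq, ← hM, hi0]; omega⟩
    have hvalid2 := hvalid
    rw [← hS'] at hvalid2
    rw [if_pos hvalid2, hS']
    have hA' : {i : Fin k | M - t i ≤ j} = {i | M - t i < j + 1} := by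
      ext i; simp [Nat.lt_succ_iff]
    have hdiff : {i : Fin k | M - t i ≤ j} \ {i | M - t i < j} = {i | t i = M - j} := by
      ext i
      have := hti i
      simp only [Set.mem_diff, Set.mem_setOf_eq]
      omega
    have hlist : (List.ofFn fun r : Fin (j + 1) => cntEq t (M - (j + 1) + 1 + r))
        = cntEq t (M - j) :: (List.ofFn fun r : Fin j => cntEq t (M - j + 1 + r)) := by
      rw [List.ofFn_succ]
      congr 1
      · congr 1
        simp only [Fin.val_zero]
        omega
      · apply congrArg
        funext r
        congr 1
        simp only [Fin.val_succ]
        omega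
    rw [hlist, hvec_cons, hdiff, hA']
    have hcnt : Set.ncard {i : Fin k | t i = M - j} = cntEq t (M - j) := rfl
    rw [hcnt]

lemma run_shape {E : Set (V × C × V)} {k : ℕ} :
    ∀ (w : List (Fin k → Option Unit)) (s : Set (Fin k) × (Set V → Prop)),
      (auto E k).evalFrom (auto E k).start w = some s →
      ∃ t : Fin k → ℕ, Monotone t ∧ Finset.univ.sup t = w.length ∧ w = wordOf t := by
  intro w
  induction w using List.reverseRecOn with
  | nil =>
    intro s _
    have hsup0 : Finset.univ.sup (fun _ : Fin k => 0) = 0 :=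
      le_antisymm (Finset.sup_le fun i _ => le_refl 0) (Nat.zero_le _)
    refine ⟨fun _ => 0, fun _ _ _ => le_refl 0, by simpa using hsup0, ?_⟩
    exact (List.eq_nil_of_length_eq_zero (by simp [wordOf, hsup0])).symm
  | append_singleton w g ih =>
    intro s hs
    rw [DFA.evalFrom_append_singleton] at hs
    rcases h' : (auto E k).evalFrom (auto E k).start w with _ | s'
    · rw [h'] at hs
      exact absurd hs (by simp [auto])
    rcases s' with ⟨A, W⟩
    obtain ⟨t, ht, hsup, hw⟩ := ih (A, W) h'
    set M := Finset.univ.sup t with hM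
    have hti : ∀ i, t i ≤ M := fun i => Finset.le_sup (Finset.mem_univ i)
    have hMw : M = w.length := hsup
    have hlenw : (wordOf t).length = M := by simp [wordOf, ← hM]
    have htake : (wordOf t).take M = wordOf t := by
      conv_lhs => rw [← hlenw]
      exact List.take_length
    have hrun := run_wordOf (E := E) t ht M (le_refl M)
    rw [htake, ← hw, h'] at hrun
    have hA : A = {i | M - t i < M} := by
      have := Option.some_inj.mp hrun
      exact congrArg Prod.fst this
    have hA0 : A = {i | 0 < t i} := by
      rw [hA]
      ext i
      have := hti i
      simp only [Set.mem_setOf_eq]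
      omega
    rw [h'] at hs
    dsimp only [auto] at hs
    by_cases hval : A ⊆ {i | (g i).isSome} ∧
        (∀ i j : Fin k, i ≤ j → i ∈ {i' | (g i').isSome} → j ∈ {i' | (g i').isSome}) ∧
        ({i : Fin k | (g i).isSome}).Nonempty
    swap
    · rw [if_neg hval] at hs
      exact absurd hs (by simp)
    obtain ⟨hsub', hup, hne⟩ := hval
    classical
    set t' : Fin k → ℕ := fun i => if (g i).isSome then t i + 1 else 0 with ht'def
    have ht'mono : Monotone t' := by
      intro i i' hle
      simp only [ht'def]
      by_cases hiS : (g i).isSome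
      · have hi'S : (g i').isSome := hup i i' hle hiS
        rw [if_pos hiS, if_pos hi'S]
        exact Nat.succ_le_succ (ht hle)
      · rw [if_neg hiS]
        exact Nat.zero_le _
    have ht'sup : Finset.univ.sup t' = M + 1 := by
      apply le_antisymm
      · apply Finset.sup_le
        intro i _
        simp only [ht'def]
        by_cases hiS : (g i).isSome
        · rw [if_pos hiS]
          have := hti i
          omega
        · rw [if_neg hiS]
          exact Nat.zero_le _
      · rcases Nat.eq_zero_or_pos M with hM0 | hM0
        · obtain ⟨i0, hi0⟩ := hne
          have ht0 : t i0 = 0 := by have := hti i0; omega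
          have h2 : t' i0 = M + 1 := by
            simp only [Set.mem_setOf_eq] at hi0
            simp [ht'def, hi0, ht0, hM0]
          have h3 := Finset.le_sup (f := t') (Finset.mem_univ i0)
          omega
        · obtain ⟨i1, hi1⟩ := sup_attained t hM0
          have hi1A : i1 ∈ A := by rw [hA0]; simp only [Set.mem_setOf_eq]; omega
          have hi1S : (g i1).isSome := hsub' hi1A
          have h2 : t' i1 = M + 1 := by simp [ht'def, hi1S, hi1, ← hM]
          have h3 := Finset.le_sup (f := t') (Finset.mem_univ i1)
          omega
    refine ⟨t', ht'mono, ?_, ?_⟩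
    · rw [ht'sup]
      simp only [List.length_append, List.length_singleton]
      omega
    · apply List.ext_getElem
      · simp only [wordOf, List.length_ofFn, List.length_append, List.length_singleton, ht'sup]
        omega
      · intro jj h1 h2
        have hjj : jj < M + 1 := by
          simp only [List.length_append, List.length_singleton] at h1
          omega
        have hR : (wordOf t')[jj]'h2
            = fun i => if Finset.univ.sup t' - t' i ≤ jj then some () else none := by
          exact wordOf_getElem t' jj h2
        rw [hR, ht'sup]
        rcases Nat.lt_or_ge jj M with hcase | hcase
        · have hjw : jj < w.length := by omega
          rw [List.getElem_append_left hjw]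
          have hL : w[jj]'hjw = fun i => if M - t i ≤ jj then some () else none := by
            have h4 := congrArg (fun l : List (Fin k → Option Unit) => l[jj]?) hw
            rw [List.getElem?_eq_getElem hjw,
              List.getElem?_eq_getElem (by rw [hlenw]; omega)] at h4
            rw [Option.some_inj.mp h4]
            exact wordOf_getElem t jj (by rw [hlenw]; omega)
          rw [hL]
          funext i
          by_cases hiS : (g i).isSome
          · have e : t' i = t i + 1 := by simp [ht'def, hiS]
            rw [e, show M + 1 - (t i + 1) = M - t i by omega]
          · have hti0 : t i = 0 := by
              by_contra h0
              have hiA : i ∈ A := by rw [hA0]; simp only [Set.mem_setOf_eq]; omega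
              exact hiS (hsub' hiA)
            have e : t' i = 0 := by simp [ht'def, hiS]
            rw [e, hti0, if_neg (by omega), if_neg (by omega)]
        · have hjje : jj = w.length := by omega
          have hjM2 : jj = M := by omega
          rw [List.getElem_concat_length hjje]
          funext i
          by_cases hiS : (g i).isSome
          · have hg2 : g i = some () := by
              cases hgi : g i with
              | none => rw [hgi] at hiS; simp at hiS
              | some u => cases u; rfl
            have e : t' i = t i + 1 := by simp [ht'def, hiS]
            rw [hg2, if_pos (by rw [e]; have := hti i; omega)]
          · have hg2 : g i = none := by
              cases hgi : g i with
              | some u => rw [hgi] at hiS; simp at hiS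
              | none => rfl
            have e : t' i = 0 := by simp [ht'def, hiS]
            rw [hg2, e, if_neg (by omega)]


lemma entry_bound {X : Set (ℕ → C)} {y : ℕ → ℕ} (hy : y ∈ winningShift X) (i : ℕ) :
    y i + 1 ≤ Fintype.card C := by
  obtain ⟨T, hnil, hpc, hcnt, hbr⟩ := hy
  have hlev : ∀ n, ∃ w ∈ T, w.length = n := by
    intro n
    induction n with
    | zero => exact ⟨[], hnil, rfl⟩
    | succ n ih =>
      obtain ⟨w, hw, hl⟩ := ih
      have h2 : ({c : C | w ++ [c] ∈ T}).Nonempty :=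
        Set.nonempty_of_ncard_ne_zero (by rw [hcnt w hw]; omega)
      obtain ⟨c, hc⟩ := h2
      exact ⟨w ++ [c], hc, by simp [hl]⟩
  obtain ⟨w, hw, hl⟩ := hlev i
  have h3 := hcnt w hw
  rw [hl] at h3
  have h4 : ({c : C | w ++ [c] ∈ T}).ncard ≤ (Set.univ : Set C).ncard :=
    Set.ncard_le_ncard (Set.subset_univ _) (Set.toFinite _)
  rw [h3, Set.ncard_univ, Nat.card_eq_fintype_card] at h4
  exact h4

lemma mod_succ_cases {a m r : ℕ} (hm : 0 < m) (h : a % m = r) :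
    (r + 1 < m → (a + 1) % m = r + 1) ∧ (r + 1 = m → (a + 1) % m = 0) := by
  have hd := Nat.div_add_mod a m
  constructor
  · intro hlt
    have h2 : a + 1 = m * (a / m) + (r + 1) := by omega
    rw [h2, Nat.mul_add_mod]
    exact Nat.mod_eq_of_lt hlt
  · intro heq
    have h2 : a + 1 = m * (a / m + 1) := by
      rw [Nat.mul_add, Nat.mul_one]; omega
    rw [h2]
    exact Nat.mul_mod_right _ _

lemma uncountable_of_win {X : Set (ℕ → C)} {β : ℕ → ℕ} (hβ : β ∈ winningShift X)
    (hinf : ∀ N, ∃ j, N ≤ j ∧ β j ≠ 0) : ¬ X.Countable := by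
  classical
  obtain ⟨T, hST⟩ := hβ
  obtain ⟨hnil, hpc, hcnt, hbr⟩ := hST
  have hpair : ∀ w, w ∈ T → ∃ a b : C,
      (w ++ [a] ∈ T ∧ w ++ [b] ∈ T ∧ (β w.length ≠ 0 → a ≠ b)) := by
    intro w hw
    by_cases hbw : β w.length = 0
    · have h2 : ({c : C | w ++ [c] ∈ T}).Nonempty :=
        Set.nonempty_of_ncard_ne_zero (by rw [hcnt w hw]; omega)
      obtain ⟨c, hc⟩ := h2
      exact ⟨c, c, hc, hc, fun h => absurd hbw h⟩
    · have h2 : 1 < ({c : C | w ++ [c] ∈ T}).ncard := by rw [hcnt w hw]; omega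
      obtain ⟨a, ha, b, hb, hab⟩ := (Set.one_lt_ncard (Set.toFinite _)).mp h2
      exact ⟨a, b, ha, hb, fun _ => hab⟩
  obtain ⟨c₀, _, hc₀, _⟩ := hpair [] hnil
  haveI : Nonempty C := ⟨c₀⟩
  choose! sel0 sel1 hsel0 hsel1 hseldiff using hpair
  have hstep : ∀ N : ℕ, ∃ j, N + 1 ≤ j ∧ β j ≠ 0 := fun N => hinf (N + 1)
  set e : ℕ → ℕ :=
    fun r => Nat.rec ((hinf 0).choose) (fun _ prev => (hstep prev).choose) r with he
  have he0 : β (e 0) ≠ 0 := (hinf 0).choose_spec.2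
  have hesucc : ∀ r, e r < e (r + 1) ∧ β (e (r + 1)) ≠ 0 := by
    intro r
    have h1 := (hstep (e r)).choose_spec
    have hee : e (r + 1) = (hstep (e r)).choose := rfl
    exact ⟨by omega, by rw [hee]; exact h1.2⟩
  have hemono : StrictMono e := strictMono_nat_of_lt_succ (fun r => (hesucc r).1)
  have heβ : ∀ r, β (e r) ≠ 0 := by
    intro r
    cases r with
    | zero => exact he0
    | succ r => exact (hesucc r).2
  set pick : List C → Bool → C := fun w b => if b then sel1 w else sel0 w with hpick
  set g : (ℕ → Bool) → ℕ → List C := fun f m =>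
    Nat.rec [] (fun m' prev =>
      prev ++ [pick prev (if h : ∃ r, e r = m' then f h.choose else false)]) m with hg
  have hg0 : ∀ f, g f 0 = [] := fun f => rfl
  have hgsucc : ∀ f m, g f (m + 1)
      = g f m ++ [pick (g f m) (if h : ∃ r, e r = m then f h.choose else false)] :=
    fun f m => rfl
  have hgT : ∀ f m, g f m ∈ T := by
    intro f m
    induction m with
    | zero => exact hnil
    | succ m ih =>
      rw [hgsucc]
      cases hb : (if h : ∃ r, e r = m then f h.choose else false)
      · have h2 : pick (g f m) false = sel0 (g f m) := by simp [hpick]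
        rw [h2]
        exact hsel0 _ ih
      · have h2 : pick (g f m) true = sel1 (g f m) := by simp [hpick]
        rw [h2]
        exact hsel1 _ ih
  have hglen : ∀ f m, (g f m).length = m := by
    intro f m
    induction m with
    | zero => rfl
    | succ m ih => rw [hgsucc]; simp [ih]
  set x : (ℕ → Bool) → ℕ → C := fun f i => (g f (i + 1)).getD i c₀ with hx
  have hxX : ∀ f, x f ∈ X := by
    intro f
    obtain ⟨x', hx', hofn⟩ := chainX ⟨hnil, hpc, hcnt, hbr⟩ (g f) (hg0 f) (hgT f)
      (fun m => ⟨_, hgsucc f m⟩)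
    have hxeq : x f = x' := by
      funext i
      have hlen2 : i < (g f (i + 1)).length := by have := hglen f (i + 1); omega
      have h5 := congrArg (fun l : List C => l[i]?) (hofn (i + 1))
      rw [List.getElem?_ofFn, dif_pos (by omega : i < i + 1)] at h5
      rw [List.getElem?_eq_getElem hlen2] at h5
      have h6 := Option.some_inj.mp h5
      show (g f (i + 1)).getD i c₀ = x' i
      rw [List.getD_eq_getElem _ _ hlen2, ← h6]
    rw [hxeq]
    exact hx'
  have hginj : ∀ f f' m, (∀ r, e r < m → f r = f' r) → g f m = g f' m := by
    intro f f' m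
    induction m with
    | zero => intro _; rfl
    | succ m ih =>
      intro hagree
      have h1 : g f m = g f' m := ih (fun r hr => hagree r (by omega))
      rw [hgsucc, hgsucc, h1]
      by_cases h : ∃ r, e r = m
      · rw [dif_pos h, dif_pos h, hagree h.choose (by rw [h.choose_spec]; omega)]
      · rw [dif_neg h, dif_neg h]
  have hxinj : Function.Injective x := by
    intro f f' hxy
    by_contra hne2
    have hex : ∃ r, f r ≠ f' r := by
      by_contra h
      push_neg at h
      exact hne2 (funext h)
    set r := Nat.find hex with hr
    have hfr : f r ≠ f' r := Nat.find_spec hex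
    have hmin : ∀ q, q < r → f q = f' q := fun q hq => not_not.mp (Nat.find_min hex hq)
    have hgeq : g f (e r) = g f' (e r) :=
      hginj f f' (e r) (fun q hq => hmin q (hemono.lt_iff_lt.mp hq))
    have hhex : ∃ r', e r' = e r := ⟨r, rfl⟩
    have hch : hhex.choose = r := hemono.injective hhex.choose_spec
    have h6 : ∀ (f0 : ℕ → Bool), x f0 (e r)
        = pick (g f0 (e r)) (if h : ∃ r', e r' = e r then f0 h.choose else false) := by
      intro f0
      show (g f0 (e r + 1)).getD (e r) c₀ = _
      rw [hgsucc]
      have h9 := hglen f0 (e r)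
      rw [List.getD_eq_getElem _ _ (by simp only [List.length_append, List.length_singleton]; omega)]
      rw [List.getElem_concat_length h9.symm]
    have h7 := congrFun hxy (e r)
    rw [h6 f, h6 f', hgeq, dif_pos hhex, dif_pos hhex, hch] at h7
    have hwT : g f' (e r) ∈ T := hgT f' _
    have hne3 : sel0 (g f' (e r)) ≠ sel1 (g f' (e r)) := by
      intro hcontra
      have h9 := hglen f' (e r)
      exact (hseldiff _ hwT (by rw [h9]; exact heβ r)) hcontra
    cases hf1 : f r <;> cases hf2 : f' r
    · exact hfr (by rw [hf1, hf2])
    · rw [hf1, hf2] at h7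
      simp only [hpick, if_pos, if_neg, Bool.false_eq_true, ite_false, ite_true] at h7
      exact hne3 h7
    · rw [hf1, hf2] at h7
      simp only [hpick, Bool.false_eq_true, ite_false, ite_true] at h7
      exact hne3 h7.symm
    · exact hfr (by rw [hf1, hf2])
  intro hcount
  haveI := hcount.to_subtype
  have hcnt2 : Countable (ℕ → Bool) := by
    have hx2 : Function.Injective (fun f => (⟨x f, hxX f⟩ : ↥X)) := by
      intro f f' h
      exact hxinj (congrArg Subtype.val h)
    exact hx2.countable
  obtain ⟨F, hF⟩ := exists_surjective_nat (ℕ → Bool)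
  have hsurj : Function.Surjective (fun n => {m | F n m = true} : ℕ → Set ℕ) := by
    intro s
    obtain ⟨n, hn⟩ := hF (fun m => decide (m ∈ s))
    refine ⟨n, ?_⟩
    ext m
    simp [hn]
  exact Function.cantor_surjective _ hsurj

lemma accept_iff {E : Set (V × C × V)} {X : Set (ℕ → C)} (hsub : IsSubshift X)
    (hX : X = SG E) {k : ℕ} (t : Fin k → ℕ) (ht : Monotone t) :
    ((auto E k).eval (wordOf t) ∈ (auto E k).accept) ↔
      (fun m => Set.ncard {i : Fin k | t i = m}) ∈ winningShift X := by
  set M := Finset.univ.sup t with hM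
  have hti : ∀ i, t i ≤ M := fun i => Finset.le_sup (Finset.mem_univ i)
  have hlenw : (wordOf t).length = M := by simp [wordOf, ← hM]
  have htake : (wordOf t).take M = wordOf t := by
    have h1 := List.take_length (l := wordOf t)
    rwa [hlenw] at h1
  have hrun := run_wordOf (E := E) t ht M (le_refl M)
  rw [htake] at hrun
  have hacc : ((auto E k).eval (wordOf t) ∈ (auto E k).accept) ↔
      StepW E (k - Set.ncard {i : Fin k | M - t i < M})
        (Hvec E (List.ofFn fun r : Fin M => cntEq t (M - M + 1 + r))) Set.univ := by
    constructor
    · rintro ⟨A, W, hAW, hstep⟩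
      have h9 : (some ({i : Fin k | M - t i < M},
          Hvec E (List.ofFn fun r : Fin M => cntEq t (M - M + 1 + r)))
          : Option (Set (Fin k) × (Set V → Prop))) = some (A, W) := by
        rw [← hrun, ← hAW]; rfl
      have h10 := Option.some_inj.mp h9
      have hA := congrArg Prod.fst h10
      have hW := congrArg Prod.snd h10
      simp only at hA hW
      rw [hA, hW]
      exact hstep
    · intro h
      exact ⟨_, _, hrun, h⟩
  rw [hacc]
  have hc0 : k - Set.ncard {i : Fin k | M - t i < M} = cntEq t 0 := by
    have h1 : {i : Fin k | M - t i < M} = {i | 0 < t i} := by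
      ext i
      have := hti i
      simp only [Set.mem_setOf_eq]
      omega
    rw [h1]
    have h2 := Set.ncard_add_ncard_compl ({i : Fin k | 0 < t i})
    have h3 : ({i : Fin k | 0 < t i})ᶜ = {i | t i = 0} := by
      ext i
      simp only [Set.mem_compl_iff, Set.mem_setOf_eq]
      omega
    rw [h3] at h2
    have h4 : Nat.card (Fin k) = k := by simp
    rw [h4] at h2
    show k - _ = Set.ncard {i : Fin k | t i = 0}
    omega
  have hlist : (List.ofFn fun r : Fin (M + 1) => cntEq t r)
      = cntEq t 0 :: (List.ofFn fun r : Fin M => cntEq t (M - M + 1 + r)) := by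
    rw [List.ofFn_succ]
    congr 1
    · apply congrArg
      funext r
      show cntEq t (r.val + 1) = cntEq t (M - M + 1 + r.val)
      congr 1
      omega
  have hstep_iff : StepW E (k - Set.ncard {i : Fin k | M - t i < M})
      (Hvec E (List.ofFn fun r : Fin M => cntEq t (M - M + 1 + r))) Set.univ ↔
      Hvec E (List.ofFn fun r : Fin (M + 1) => cntEq t r) Set.univ := by
    rw [hlist, hvec_cons, hc0]
  rw [hstep_iff]
  have hy0 : ∀ j, M + 1 ≤ j → cntEq t j = 0 := by
    intro j hj
    show Set.ncard {i : Fin k | t i = j} = 0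
    have h5 : {i : Fin k | t i = j} = ∅ := by
      ext i
      have := hti i
      simp only [Set.mem_setOf_eq, Set.mem_empty_iff_false, iff_false]
      omega
    rw [h5, Set.ncard_empty]
  exact (win_equiv hsub hX (y := cntEq t) (n := M + 1) hy0).symm

lemma recog {E : Set (V × C × V)} {X : Set (ℕ → C)} (hsub : IsSubshift X)
    (hX : X = SG E) (k : ℕ) :
    unaryANS.Recognizable (nuSet (winningShift X) k) := by
  classical
  haveI : Fintype (Set (Fin k) × (Set V → Prop)) := Fintype.ofFinite _
  refine ⟨Option (Set (Fin k) × (Set V → Prop)), inferInstance, auto E k, ?_⟩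
  intro w
  rw [DFA.mem_accepts]
  constructor
  · intro hacc
    obtain ⟨A, W, hAW, hstep⟩ := hacc
    obtain ⟨t, ht, hsup, hw⟩ := run_shape w (A, W) hAW
    have hacc2 : (auto E k).eval (wordOf t) ∈ (auto E k).accept := by
      rw [← hw]
      exact ⟨A, W, hAW, hstep⟩
    have hwin := (accept_iff hsub hX t ht).mp hacc2
    exact ⟨t, ⟨ht, hwin⟩, by rw [hw, pad_eq]⟩
  · rintro ⟨t, ⟨ht, hwin⟩, rfl⟩
    rw [pad_eq]
    exact (accept_iff hsub hX t ht).mpr hwin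

lemma fin_dim {E : Set (V × C × V)} {X : Set (ℕ → C)} (hsub : IsSubshift X)
    (hX : X = SG E) (hc : X.Countable) : FiniteCodingDim (winningShift X) := by
  classical
  refine ⟨Nat.card (Set V → Prop) * Fintype.card C, ?_⟩
  intro y hy F
  by_contra hbig
  push_neg at hbig
  set ν := Nat.card (Set V → Prop) with hν
  set n := (F.sup id) + 1 with hn
  have hFsub : F ⊆ Finset.range n := by
    intro i hi
    have := Finset.le_sup (f := id) hi
    simp only [id] at this
    simp only [hn, Finset.mem_range]
    omega
  have hsum : ν * Fintype.card C < ∑ i ∈ Finset.range n, y i :=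
    lt_of_lt_of_le hbig (Finset.sum_le_sum_of_subset hFsub)
  have hbound : ∀ i, y i + 1 ≤ Fintype.card C := entry_bound hy
  set l := List.ofFn (fun i : Fin n => y i) with hl
  have hlen_l : l.length = n := by simp [hl, hn]
  have hHl : Hvec E l Set.univ := win_to_hvec hX hy n
  set NZ := (Finset.range n).filter (fun i => y i ≠ 0) with hNZ
  have hlget : ∀ (j : ℕ) (hj : j < l.length), l[j]'hj = y j := by
    intro j hj
    have h20 : l[j]? = some (y j) := by
      rw [hl, List.getElem?_ofFn,
        dif_pos (by have := hlen_l; omega : j < n)]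
    rw [List.getElem?_eq_getElem hj] at h20
    exact Option.some_inj.mp h20
  have hsum2 : ∑ i ∈ Finset.range n, y i = ∑ i ∈ NZ, y i :=
    (Finset.sum_filter_ne_zero _).symm
  have hcard : ν < NZ.card := by
    by_contra hle
    push_neg at hle
    have h6 : ∑ i ∈ NZ, y i ≤ NZ.card • Fintype.card C := by
      apply Finset.sum_le_card_nsmul
      intro i _
      have := hbound i
      omega
    rw [smul_eq_mul] at h6
    have h7 : NZ.card * Fintype.card C ≤ ν * Fintype.card C :=
      Nat.mul_le_mul_right _ hle
    omega
  have hmaps : ∀ p ∈ NZ, (Hvec E (l.drop p)) ∈ (Finset.univ : Finset (Set V → Prop)) :=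
    fun _ _ => Finset.mem_univ _
  have hcard2 : (Finset.univ : Finset (Set V → Prop)).card < NZ.card := by
    rw [Finset.card_univ, ← Nat.card_eq_fintype_card]
    exact hcard
  obtain ⟨a, ha, b, hb, hpne, hpeq0⟩ :=
    Finset.exists_ne_map_eq_of_card_lt_of_maps_to hcard2 hmaps
  -- order them
  have key : ∀ p1 p2 : ℕ, p1 ∈ NZ → p2 ∈ NZ → p1 < p2 →
      Hvec E (l.drop p1) = Hvec E (l.drop p2) → False := by
    intro p1 p2 hp1 hp2 hplt hpeq
    have hp1n : p1 < n := Finset.mem_range.mp (Finset.mem_filter.mp hp1).1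
    have hp2n : p2 < n := Finset.mem_range.mp (Finset.mem_filter.mp hp2).1
    have hy1 : y p1 ≠ 0 := by
      have := (Finset.mem_filter.mp hp1).2
      simpa using this
    set s := (l.drop p1).take (p2 - p1) with hs
    set tl := l.drop p2 with htl
    have hslen : s.length = p2 - p1 := by
      rw [hs, List.length_take, List.length_drop, hlen_l]
      omega
    have hspos : 0 < s.length := by omega
    have hst : l.drop p1 = s ++ tl := by
      have h8 := List.take_append_drop (p2 - p1) (l.drop p1)
      rw [List.drop_drop] at h8
      rw [show p1 + (p2 - p1) = p2 from by omega] at h8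
      exact h8.symm
    have hfix : Hvec E (s ++ tl) = Hvec E tl := by
      rw [← hst, hpeq, htl]
    set β : ℕ → ℕ := fun j => if j < p1 then y j else s.getD ((j - p1) % s.length) 0 with hβ
    set γ : ℕ → List ℕ :=
      fun j => if j < p1 then l.drop j else s.drop ((j - p1) % s.length) ++ tl with hγ
    have hβwin : β ∈ winningShift X := by
      apply vecToWin hsub hX β (fun j => Hvec E (γ j))
      · intro j P hP
        rcases Nat.lt_or_ge j p1 with hj | hj
        · have hjl : j < l.length := by omega
          have hd : l.drop j = l[j] :: l.drop (j + 1) := List.drop_eq_getElem_cons hjl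
          rw [hγ] at hP
          dsimp only at hP
          rw [if_pos hj, hd, hvec_cons] at hP
          have hβj : β j = l[j]'hjl := by
            rw [hβ]
            dsimp only
            rw [if_pos hj]
            exact (hlget j hjl).symm
          rw [hβj]
          rcases Nat.lt_or_ge (j + 1) p1 with hj1 | hj1
          · have h11 : γ (j + 1) = l.drop (j + 1) := by
              rw [hγ]; dsimp only; rw [if_pos hj1]
            rw [h11]
            exact hP
          · have hj1e : j + 1 = p1 := by omega
            have h11 : γ (j + 1) = s ++ tl := by
              rw [hγ]; dsimp only
              rw [if_neg (by omega)]
              rw [show (j + 1 - p1) % s.length = 0 from by rw [hj1e]; simp]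
              rw [List.drop_zero]
            rw [h11, hfix]
            rw [hj1e, hst, hfix] at hP
            exact hP
        · set r := (j - p1) % s.length with hr
          have hrs : r < s.length := Nat.mod_lt _ (by omega)
          have hd : s.drop r = s[r] :: s.drop (r + 1) := List.drop_eq_getElem_cons hrs
          rw [hγ] at hP
          dsimp only at hP
          rw [if_neg (by omega), ← hr, hd, List.cons_append, hvec_cons] at hP
          have hβj : β j = s[r] := by
            rw [hβ]
            dsimp only
            rw [if_neg (by omega), ← hr]
            exact List.getD_eq_getElem _ _ hrs
          rw [hβj]
          have hmod := mod_succ_cases (a := j - p1) (m := s.length) hspos hr.symm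
          rcases Nat.lt_or_ge (r + 1) s.length with hr1 | hr1
          · have he2 : (j + 1 - p1) % s.length = r + 1 := by
              rw [show j + 1 - p1 = (j - p1) + 1 from by omega]
              exact hmod.1 hr1
            have h11 : γ (j + 1) = s.drop (r + 1) ++ tl := by
              rw [hγ]; dsimp only
              rw [if_neg (by omega), he2]
            rw [h11]
            exact hP
          · have hr1e : r + 1 = s.length := by omega
            have he2 : (j + 1 - p1) % s.length = 0 := by
              rw [show j + 1 - p1 = (j - p1) + 1 from by omega]
              exact hmod.2 hr1e
            have h11 : γ (j + 1) = s ++ tl := by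
              rw [hγ]; dsimp only
              rw [if_neg (by omega), he2, List.drop_zero]
            rw [h11, hfix]
            rw [hr1e, List.drop_length, List.nil_append] at hP
            exact hP
      · intro j P hP
        exact hvec_live _ _ hP
      · rcases Nat.eq_zero_or_pos p1 with h0 | h0
        · have h11 : γ 0 = s ++ tl := by
            rw [hγ]; dsimp only
            rw [if_neg (by omega)]
            rw [show (0 - p1) % s.length = 0 from by rw [h0]; simp]
            rw [List.drop_zero]
          rw [h11, hfix]
          rw [h0, List.drop_zero] at hst
          rw [← hfix, ← hst]
          exact hHl
        · have h11 : γ 0 = l := by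
            rw [hγ]; dsimp only
            rw [if_pos h0, List.drop_zero]
          rw [h11]
          exact hHl
    have hβinf : ∀ N, ∃ j, N ≤ j ∧ β j ≠ 0 := by
      intro N
      refine ⟨p1 + s.length * N, ?_, ?_⟩
      · have h12 : N ≤ s.length * N := Nat.le_mul_of_pos_left N hspos
        omega
      · rw [hβ]
        dsimp only
        rw [if_neg (by omega)]
        rw [show p1 + s.length * N - p1 = s.length * N from by omega]
        rw [Nat.mul_mod_right]
        have hs0 : s.getD 0 0 = y p1 := by
          rw [List.getD_eq_getElem _ _ hspos]
          have h13 : s[0]'hspos = (l.drop p1)[0]'(by rw [List.length_drop]; omega) :=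
            List.getElem_take
          have h14 : (l.drop p1)[0]'(by rw [List.length_drop]; omega)
              = l[p1 + 0]'(by omega) := List.getElem_drop
          rw [h13, h14, hlget (p1 + 0) (by omega)]
          norm_num
        rw [hs0]
        exact hy1
    exact (uncountable_of_win hβwin hβinf) hc
  rcases lt_trichotomy a b with h | h | h
  · exact key a b ha hb h hpeq0
  · exact hpne h
  · exact key b a hb ha h hpeq0.symm

end PS17

/-- The winning shift of a sofic subshift is weakly 1-codable; the winning
shift of a countable sofic subshift is 1-codable. -/
theorem stmt17 {C : Type} [Fintype C] (X : Set (ℕ → C)) (hsub : IsSubshift X)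
    (hsofic : IsSofic X) :
    WeaklySCodable unaryANS (winningShift X) ∧
    (X.Countable → SCodable unaryANS (winningShift X)) := by
  obtain ⟨V, finV, E, hX⟩ := hsofic
  haveI := finV
  have hX' : X = PS17.SG E := hX
  refine ⟨fun k => PS17.recog hsub hX' k, fun hc => ⟨fun k => PS17.recog hsub hX' k, PS17.fin_dim hsub hX' hc⟩⟩
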